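/- Let F be a nonzero positive semidefinite matrix on ℂ^{d_A} ⊗ ℂ^{d_B} whose partial trace over the first factor satisfies tr_A(F) = λ·1_{d_B} for some λ > 0. Then there exist a constant c > 0 and a quantum channel Λ from d_B×d_B matrices to d_A×d_A matrices such that tr(F τ) = c · tr(|φ⁺_{d_A}⟩⟨φ⁺_{d_A}| (id_{d_A} ⊗ Λ)(τ)) for every matrix τ on ℂ^{d_A} ⊗ ℂ^{d_B}, where |φ⁺_{d_A}⟩ = (1/√d_A) Σ_{n=0}^{d_A−1} |n⟩ ⊗ |n⟩. -/

import Mathlib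

open scoped ComplexOrder Kronecker
open Matrix

noncomputable section

/-- Square complex matrices of size `d`. -/
abbrev Mat (d : ℕ) : Type := Matrix (Fin d) (Fin d) ℂ

/-- Square complex matrices on the bipartite space `ℂ^dA ⊗ ℂ^dB`. -/
abbrev BMat (dA dB : ℕ) : Type := Matrix (Fin dA × Fin dB) (Fin dA × Fin dB) ℂ

/-- A quantum state: a positive semidefinite matrix of unit trace. -/
def IsState {n : Type*} [Fintype n] (ρ : Matrix n n ℂ) : Prop :=
  ρ.PosSemidef ∧ ρ.trace = 1

/-- Trace norm `‖A‖₁ = tr √(Aᴴ A)`. -/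
noncomputable def traceNorm {n : Type*} [Fintype n] [DecidableEq n] (A : Matrix n n ℂ) : ℝ :=
  (((Matrix.posSemidef_conjTranspose_mul_self A).1.eigenvectorUnitary.1 *
      Matrix.diagonal (((↑) : ℝ → ℂ) ∘ (√·) ∘ (Matrix.posSemidef_conjTranspose_mul_self A).1.eigenvalues) *
      (star (Matrix.posSemidef_conjTranspose_mul_self A).1.eigenvectorUnitary :
        Matrix n n ℂ)).trace).re

/-- Operator (spectral) norm of a square complex matrix. -/
noncomputable def opNorm {n : Type*} [Fintype n] [DecidableEq n] (A : Matrix n n ℂ) : ℝ :=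
  ‖LinearMap.toContinuousLinearMap (Matrix.toEuclideanLin A)‖

/-- The partial action `id_{dA} ⊗ Λ` of a map `Λ` on block matrices. -/
def idTensor {dA dB dC : ℕ} (Λ : Mat dB → Mat dC) (ρ : BMat dA dB) : BMat dA dC :=
  fun p q => Λ (fun i j => ρ (p.1, i) (q.1, j)) p.2 q.2

/-- `Λ` is `k`-positive: `id_k ⊗ Λ` preserves positive semidefiniteness. -/
def kPositive (k : ℕ) {dB dC : ℕ} (Λ : Mat dB → Mat dC) : Prop :=
  ∀ ρ : BMat k dB, ρ.PosSemidef → (idTensor Λ ρ).PosSemidef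

/-- Completely positive: `k`-positive for every `k`. -/
def CompletelyPositive {dB dC : ℕ} (Λ : Mat dB → Mat dC) : Prop :=
  ∀ k : ℕ, kPositive k Λ

/-- Trace-preserving map. -/
def TracePreserving {dB dC : ℕ} (Λ : Mat dB → Mat dC) : Prop :=
  ∀ X : Mat dB, (Λ X).trace = X.trace

/-- A quantum channel: completely positive and trace-preserving linear map. -/
def IsChannel {dB dC : ℕ} (Λ : Mat dB →ₗ[ℂ] Mat dC) : Prop :=
  CompletelyPositive (⇑Λ) ∧ TracePreserving (⇑Λ)

/-- Schmidt rank of a bipartite vector: the minimal number of product terms in a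
decomposition `ψ = Σ_t a_t ⊗ b_t`. -/
def SchmidtRank {dA dB : ℕ} (ψ : Fin dA × Fin dB → ℂ) : ℕ :=
  sInf {r : ℕ | ∃ (a : Fin r → Fin dA → ℂ) (b : Fin r → Fin dB → ℂ),
    ∀ i j, ψ (i, j) = ∑ t, a t i * b t j}

/-- The Schmidt number of `ρ` is at most `k`: there is a pure-state decomposition
`ρ = Σ_i p_i |ψ_i⟩⟨ψ_i|` with all Schmidt ranks at most `k`. -/
def SchmidtNumberLE {dA dB : ℕ} (ρ : BMat dA dB) (k : ℕ) : Prop :=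
  ∃ (n : ℕ) (p : Fin n → ℝ) (ψ : Fin n → (Fin dA × Fin dB → ℂ)),
    (∀ i, 0 ≤ p i) ∧ (∀ i, ∑ x, ‖ψ i x‖ ^ 2 = 1) ∧
    (∀ i, SchmidtRank (ψ i) ≤ k) ∧
    ρ = ∑ i, (p i : ℂ) • Matrix.vecMulVec (ψ i) (star (ψ i))

/-- The (generalized) Schmidt-number robustness `R_{S_k}`. -/
noncomputable def robustness {dA dB : ℕ} (k : ℕ) (ρ : BMat dA dB) : ℝ :=
  sInf {R : ℝ | 0 ≤ R ∧ ∃ σ τ : BMat dA dB,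
    IsState σ ∧ SchmidtNumberLE σ k ∧ IsState τ ∧
    ρ = ((1 + R : ℝ) : ℂ) • σ - (R : ℂ) • τ}

/-- Partial trace over the first tensor factor. -/
def ptraceFirst {dA dB : ℕ} (ρ : BMat dA dB) : Mat dB :=
  fun i j => ∑ a : Fin dA, ρ (a, i) (a, j)

/-- Partial trace over the second tensor factor. -/
def ptraceSecond {dA dB : ℕ} (ρ : BMat dA dB) : Mat dA :=
  fun a b => ∑ i : Fin dB, ρ (a, i) (b, i)

/-- Embed a `BMat dA d` as the top-left block (in the second factor) of a `BMat dA (d+1)`. -/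
def padSnd {dA d : ℕ} (M : BMat dA d) : BMat dA (d + 1) :=
  fun p q =>
    if h : (p.2 : ℕ) < d ∧ (q.2 : ℕ) < d then M (p.1, ⟨p.2, h.1⟩) (q.1, ⟨q.2, h.2⟩) else 0

/-- The shift unitary `X|n⟩ = |n+1 mod d⟩`. -/
def shiftMat (d : ℕ) : Mat d :=
  fun i j => if (i : ℕ) = ((j : ℕ) + 1) % d then 1 else 0

/-- The clock unitary `Z|n⟩ = e^{2πin/d}|n⟩`. -/
def clockMat (d : ℕ) : Mat d :=
  fun i j => if i = j then Complex.exp (2 * Real.pi * Complex.I * (i : ℕ) / d) else 0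

/-- The Heisenberg-Weyl unitary `X^k Z^l`. -/
def heisenbergU (d k l : ℕ) : Mat d := shiftMat d ^ k * clockMat d ^ l

/-- The maximally entangled unit vector `|φ⁺⟩ = (1/√d) Σ_n |n⟩ ⊗ |n⟩`. -/
def phiPlus (d : ℕ) : Fin d × Fin d → ℂ :=
  fun p => if p.1 = p.2 then ((1 / Real.sqrt d : ℝ) : ℂ) else 0

/-- The projection `|φ⁺⟩⟨φ⁺|`. -/
def phiProj (d : ℕ) : BMat d d := Matrix.vecMulVec (phiPlus d) (star (phiPlus d))

/-- The Bell basis projection `M_{k,l} = (1 ⊗ X^k Z^l)|φ⁺⟩⟨φ⁺|(1 ⊗ X^k Z^l)ᴴ`. -/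
def bellProj (d k l : ℕ) : BMat d d :=
  ((1 : Mat d) ⊗ₖ heisenbergU d k l) * phiProj d * ((1 : Mat d) ⊗ₖ heisenbergU d k l)ᴴ

/-- The canonical inclusion isometry `ℂ^d → ℂ^D`. -/
def inclMat (d D : ℕ) : Matrix (Fin D) (Fin d) ℂ :=
  fun i j => if (i : ℕ) = (j : ℕ) then 1 else 0

/-- Optimal guessing probability for the discrimination of the (sub)channels `Λ i`
applied with a priori probabilities `p i`, using the input state `ρ`. -/
noncomputable def pguess {dA dB D N : ℕ} (p : Fin N → ℝ) (Λ : Fin N → (Mat dB → Mat D))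
    (ρ : BMat dA dB) : ℝ :=
  sSup {x : ℝ | ∃ M : Fin N → Matrix (Fin dA × Fin D) (Fin dA × Fin D) ℂ,
    (∀ i, (M i).PosSemidef) ∧ (∑ i, M i) = 1 ∧
    x = ∑ i, p i * ((M i * idTensor (Λ i) ρ).trace).re}

/-- Optimal guessing probability over all input states of Schmidt number at most `k`. -/
noncomputable def pguessK (dA : ℕ) {dB D N : ℕ} (k : ℕ) (p : Fin N → ℝ)
    (Λ : Fin N → (Mat dB → Mat D)) : ℝ :=
  sSup {x : ℝ | ∃ σ : BMat dA dB, IsState σ ∧ SchmidtNumberLE σ k ∧ x = pguess p Λ σ}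

end

/-- a nonzero positive semidefinite `F` with `tr_A F ∝ 1` is, up to a
positive constant, the Choi operator functional `τ ↦ tr(|φ⁺⟩⟨φ⁺| (id ⊗ Λ)(τ))` of a
quantum channel `Λ`. -/
theorem stmt17 {dA dB : ℕ} (F : BMat dA dB) (hF : F.PosSemidef) (hF0 : F ≠ 0)
    (lam : ℝ) (hlam : 0 < lam) (hptr : ptraceFirst F = (lam : ℂ) • (1 : Mat dB)) :
    ∃ (c : ℝ) (Λ : Mat dB →ₗ[ℂ] Mat dA), 0 < c ∧ IsChannel Λ ∧
      ∀ τ : BMat dA dB,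
        (F * τ).trace = (c : ℂ) * (phiProj dA * idTensor (⇑Λ) τ).trace := by
  classical
  have hdA : dA ≠ 0 := by
    rintro rfl
    exact hF0 (by ext p q; exact p.1.elim0)
  have hlamC : (lam : ℂ) ≠ 0 := by
    exact_mod_cast hlam.ne'
  -- square root of F
  open scoped MatrixOrder in
  obtain ⟨S, hSsa, -, hSS⟩ := CFC.exists_sqrt_of_isSelfAdjoint_of_quasispectrumRestricts
    hF.isHermitian (QuasispectrumRestricts.nnreal_of_nonneg hF.nonneg)
  have hSH : S.IsHermitian := hSsa
  have hFentry : ∀ p q : Fin dA × Fin dB,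
      F p q = ∑ m : Fin dA × Fin dB, (starRingEnd ℂ) (S m p) * S m q := by
    intro p q
    rw [← hSS, Matrix.mul_apply]
    refine Finset.sum_congr rfl fun m _ => ?_
    congr 1
    conv_lhs => rw [← hSH.eq]
    simp [Matrix.conjTranspose_apply]
  -- scalar √λ⁻¹
  set sl : ℂ := ((Real.sqrt lam : ℝ) : ℂ)⁻¹ with hsl
  have hslconj : (starRingEnd ℂ) sl = sl := by
    simp [hsl, ← Complex.ofReal_inv]
  have hsl2 : sl * sl = (lam : ℂ)⁻¹ := by
    rw [hsl, ← mul_inv]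
    norm_cast
    rw [Real.mul_self_sqrt hlam.le]
  -- Kraus operators
  set K : (Fin dA × Fin dB) → Matrix (Fin dA) (Fin dB) ℂ :=
    fun m => Matrix.of fun j b => sl * S m (j, b) with hK
  -- the channel as a plain function
  set Lf : Mat dB → Mat dA :=
    fun X => Matrix.of fun j i => (lam : ℂ)⁻¹ * ∑ a, ∑ b, F (i, a) (j, b) * X b a with hLfdef
  have hLf : ∀ (X : Mat dB) (j i : Fin dA),
      Lf X j i = (lam : ℂ)⁻¹ * ∑ a, ∑ b, F (i, a) (j, b) * X b a := fun _ _ _ => rfl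
  -- partial trace entry identity
  have hptr' : ∀ a b : Fin dB,
      (∑ j : Fin dA, F (j, a) (j, b)) = if a = b then (lam : ℂ) else 0 := by
    intro a b
    have h := congrFun (congrFun hptr a) b
    simpa [ptraceFirst, Matrix.smul_apply, Matrix.one_apply, mul_ite, mul_one, mul_zero]
      using h
  -- Kraus representation of id ⊗ Lf
  have hKraus : ∀ (k : ℕ) (ρ : BMat k dB),
      idTensor Lf ρ = ∑ m : Fin dA × Fin dB, ((1 : Mat k) ⊗ₖ K m) * ρ * ((1 : Mat k) ⊗ₖ K m)ᴴ := by
    intro k ρ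
    ext p q
    obtain ⟨p1, p2⟩ := p
    obtain ⟨q1, q2⟩ := q
    have hterm : ∀ m : Fin dA × Fin dB,
        (((1 : Mat k) ⊗ₖ K m) * ρ * ((1 : Mat k) ⊗ₖ K m)ᴴ) (p1, p2) (q1, q2)
          = ∑ a : Fin dB, ∑ b : Fin dB,
              (sl * S m (p2, b)) * ρ (p1, b) (q1, a) * ((starRingEnd ℂ) (sl * S m (q2, a))) := by
      intro m
      simp only [Matrix.mul_apply, Matrix.conjTranspose_apply, Matrix.kroneckerMap_apply,
        Matrix.one_apply, Fintype.sum_prod_type, ite_mul, one_mul, zero_mul, mul_ite,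
        mul_zero, mul_one, apply_ite (star : ℂ → ℂ), star_zero, star_one,
        star_mul', Matrix.of_apply, Finset.sum_mul, Finset.mul_sum]
      rw [Finset.sum_comm]
      simp only [Finset.sum_ite_eq, Finset.mem_univ, if_true]
      conv_lhs => enter [2, a]; rw [Finset.sum_comm]
      simp only [Finset.sum_ite_eq, Finset.mem_univ, if_true]
      refine Finset.sum_congr rfl fun a _ => Finset.sum_congr rfl fun b _ => ?_
      simp only [hK, Matrix.of_apply, _root_.map_mul, star_mul', RCLike.star_def, hslconj]
    have hL : idTensor Lf ρ (p1, p2) (q1, q2)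
        = (lam : ℂ)⁻¹ * ∑ a, ∑ b, F (q2, a) (p2, b) * ρ (p1, b) (q1, a) := rfl
    rw [Matrix.sum_apply, hL]
    simp_rw [hterm, hFentry, Finset.sum_mul, Finset.mul_sum]
    conv_lhs => enter [2, x]; rw [Finset.sum_comm]
    rw [Finset.sum_comm]
    refine Finset.sum_congr rfl fun m _ => Finset.sum_congr rfl fun a _ =>
      Finset.sum_congr rfl fun b _ => ?_
    rw [_root_.map_mul, hslconj, ← hsl2]
    ring
  -- the linear map
  refine ⟨dA * lam,
    { toFun := Lf
      map_add' := by
        intro X Y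
        ext j i
        simp only [hLf, Matrix.add_apply, mul_add, Finset.sum_add_distrib]
      map_smul' := by
        intro c X
        ext j i
        simp only [hLf, Matrix.smul_apply, smul_eq_mul, RingHom.id_apply]
        have h1 : ∀ a : Fin dB, (∑ b, F (i, a) (j, b) * (c * X b a))
            = c * ∑ b, F (i, a) (j, b) * X b a := by
          intro a
          rw [Finset.mul_sum]
          exact Finset.sum_congr rfl fun b _ => by ring
        simp_rw [h1, ← Finset.mul_sum]
        ring }, ?_, ⟨⟨?_, ?_⟩, ?_⟩⟩
  · positivity
  · -- completely positive
    intro k ρ hρ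
    show (idTensor Lf ρ).PosSemidef
    rw [hKraus k ρ]
    refine Finset.sum_induction _ _ (fun a b ha hb => ha.add hb) Matrix.PosSemidef.zero
      fun m _ => ?_
    exact hρ.mul_mul_conjTranspose_same _
  · -- trace preserving
    intro X
    show (Lf X).trace = X.trace
    have h1 : (Lf X).trace
        = (lam : ℂ)⁻¹ * ∑ j : Fin dA, ∑ a, ∑ b, F (j, a) (j, b) * X b a := by
      rw [Matrix.trace, Finset.mul_sum]
      exact Finset.sum_congr rfl fun j _ => rfl
    rw [h1]
    have h2 : (∑ j : Fin dA, ∑ a, ∑ b, F (j, a) (j, b) * X b a)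
        = ∑ a, ∑ b, (∑ j : Fin dA, F (j, a) (j, b)) * X b a := by
      rw [Finset.sum_comm]
      refine Finset.sum_congr rfl fun a _ => ?_
      rw [Finset.sum_comm]
      exact Finset.sum_congr rfl fun b _ => (Finset.sum_mul _ _ _).symm
    rw [h2]
    simp_rw [hptr', ite_mul, zero_mul, Finset.sum_ite_eq, Finset.mem_univ, if_true]
    rw [Matrix.trace, ← Finset.mul_sum, ← mul_assoc, inv_mul_cancel₀ hlamC, one_mul]
    rfl
  · -- the trace identity
    intro τ
    have hLHS : (F * τ).trace = ∑ p : Fin dA × Fin dB, ∑ q : Fin dA × Fin dB,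
        F p q * τ q p := by
      rw [Matrix.trace]
      exact Finset.sum_congr rfl fun p _ => Matrix.mul_apply
    have hM : ∀ q p : Fin dA × Fin dA, idTensor Lf τ q p
        = (lam : ℂ)⁻¹ * ∑ a, ∑ b, F (p.2, a) (q.2, b) * τ (q.1, b) (p.1, a) := fun _ _ => rfl
    have key : ∀ M : BMat dA dA, (phiProj dA * M).trace
        = (((dA : ℝ)⁻¹ : ℝ) : ℂ) * ∑ i : Fin dA, ∑ j : Fin dA, M (j, j) (i, i) := by
      intro M
      rw [Matrix.trace]
      simp only [Matrix.diag_apply, Matrix.mul_apply, phiProj, Matrix.vecMulVec_apply,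
        Pi.star_apply, phiPlus]
      simp only [Fintype.sum_prod_type, apply_ite (star : ℂ → ℂ), star_zero, ite_mul,
        zero_mul, mul_ite, mul_zero, Finset.sum_ite_eq, Finset.sum_ite_eq',
        Finset.mem_univ, if_true]
      conv_lhs => enter [2, x]; rw [Finset.sum_comm]
      simp only [Finset.sum_ite_eq, Finset.sum_ite_eq', Finset.mem_univ, if_true]
      rw [Finset.mul_sum]
      refine Finset.sum_congr rfl fun i _ => ?_
      rw [Finset.mul_sum]
      refine Finset.sum_congr rfl fun j _ => ?_
      have hc : (star (((1 / Real.sqrt dA : ℝ) : ℂ)) : ℂ) = ((1 / Real.sqrt dA : ℝ) : ℂ) :=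
        Complex.conj_ofReal _
      have hc2 : ((1 / Real.sqrt dA : ℝ) : ℂ) * ((1 / Real.sqrt dA : ℝ) : ℂ)
          = (((dA : ℝ)⁻¹ : ℝ) : ℂ) := by
        rw [← Complex.ofReal_mul]
        congr 1
        rw [div_mul_div_comm, one_mul, Real.mul_self_sqrt (Nat.cast_nonneg dA), one_div]
      rw [hc, hc2]
    show (F * τ).trace = ((dA * lam : ℝ) : ℂ) * (phiProj dA * idTensor Lf τ).trace
    rw [hLHS, key]
    simp_rw [hM]
    simp_rw [← Finset.mul_sum]
    have hdAC : ((dA : ℝ) : ℂ) ≠ 0 := by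
      exact_mod_cast Nat.cast_ne_zero.mpr hdA
    have hscalar : ((dA * lam : ℝ) : ℂ) * ((((dA : ℝ)⁻¹ : ℝ) : ℂ) * ((lam : ℂ)⁻¹
        * ∑ i : Fin dA, ∑ j : Fin dA, ∑ a, ∑ b, F (i, a) (j, b) * τ (j, b) (i, a)))
        = ∑ i : Fin dA, ∑ j : Fin dA, ∑ a, ∑ b, F (i, a) (j, b) * τ (j, b) (i, a) := by
      rw [← mul_assoc, ← mul_assoc]
      have : ((dA * lam : ℝ) : ℂ) * (((dA : ℝ)⁻¹ : ℝ) : ℂ) * ((lam : ℂ)⁻¹) = 1 := by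
        push_cast
        field_simp
      rw [this, one_mul]
    rw [hscalar]
    simp_rw [Fintype.sum_prod_type]
    exact Finset.sum_congr rfl fun i _ => Finset.sum_comm
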